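/- Let 0 < r < 1, c > 0, and z_1 > 0 with (r+1) z_1 + c > 0, and let f : R → [0, ∞) be an integrable function on [−z_1, z_1] with f(z) = f(−z) for all z. Then ∫_{−z_1}^{z_1} z f(z) / ((r+1) z_1 + (r−1) z + c) dz = ∫_0^{z_1} 2 (1−r) z² f(z) / ( ((r+1) z_1 + c)² − (1−r)² z² ) dz, and in particular this integral is nonnegative. -/

import Mathlib

open MeasureTheory intervalIntegral

theorem symmetrization_identity (r c z1 : ℝ) (hr0 : 0 < r) (hr1 : r < 1)
    (hc : 0 < c) (hz1 : 0 < z1) (hden : 0 < (r + 1) * z1 + c)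
    (f : ℝ → ℝ) (hf0 : ∀ z, 0 ≤ f z)
    (hfint : IntegrableOn f (Set.Icc (-z1) z1))
    (hsymm : ∀ z, f z = f (-z)) :
    (∫ z in (-z1)..z1, z * f z / ((r + 1) * z1 + (r - 1) * z + c)) =
      (∫ z in (0 : ℝ)..z1,
        2 * (1 - r) * z ^ 2 * f z / (((r + 1) * z1 + c) ^ 2 - (1 - r) ^ 2 * z ^ 2)) ∧
    0 ≤ ∫ z in (-z1)..z1, z * f z / ((r + 1) * z1 + (r - 1) * z + c) := by
  have hposden : ∀ z ∈ Set.Icc (-z1) z1, 0 < (r + 1) * z1 + (r - 1) * z + c := by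
    rintro z ⟨h1, h2⟩; nlinarith
  set h : ℝ → ℝ := fun z => z * f z / ((r + 1) * z1 + (r - 1) * z + c) with hh
  -- interval integrability of f on subintervals
  have hfint' : ∀ a b : ℝ, -z1 ≤ a → b ≤ z1 → a ≤ b → IntervalIntegrable f volume a b := by
    intro a b ha hb hab
    apply (hfint.mono_set ?_).intervalIntegrable
    rw [Set.uIcc_of_le hab]
    exact Set.Icc_subset_Icc (by linarith) hb
  have hcont : ∀ a b : ℝ, -z1 ≤ a → b ≤ z1 → a ≤ b →
      ContinuousOn (fun z => z / ((r + 1) * z1 + (r - 1) * z + c)) (Set.uIcc a b) := by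
    intro a b ha hb hab
    apply ContinuousOn.div continuousOn_id (by fun_prop)
    intro z hz
    rw [Set.uIcc_of_le hab] at hz
    exact ne_of_gt (hposden z ⟨by linarith [hz.1], by linarith [hz.2]⟩)
  have hint : ∀ a b : ℝ, -z1 ≤ a → b ≤ z1 → a ≤ b → IntervalIntegrable h volume a b := by
    intro a b ha hb hab
    have := ((hfint' a b ha hb hab).mul_continuousOn (hcont a b ha hb hab))
    apply this.congr_ae
    filter_upwards with z
    simp [hh]; ring
  have hintneg : IntervalIntegrable (fun z => h (-z)) volume 0 z1 := by
    have := (IntervalIntegrable.iff_comp_neg (by simp)).mp (hint (-z1) 0 le_rfl (by linarith) (by linarith))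
    simpa using this.symm
  -- main identity
  have key : (∫ z in (-z1)..z1, h z) = ∫ z in (0:ℝ)..z1, (h z + h (-z)) := by
    rw [← integral_add_adjacent_intervals (a := -z1) (b := 0) (c := z1)
      (hint (-z1) 0 le_rfl (by linarith) (by linarith))
      (hint 0 z1 (by linarith) le_rfl (by linarith))]
    rw [integral_add (hint 0 z1 (by linarith) le_rfl (by linarith)) hintneg]
    have : (∫ z in (0:ℝ)..z1, h (-z)) = ∫ z in (-z1)..(0:ℝ), h z := by
      simpa using integral_comp_neg (a := (0:ℝ)) (b := z1) (f := h)
    rw [this]; ring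
  have hcongr : (∫ z in (0:ℝ)..z1, (h z + h (-z))) =
      ∫ z in (0:ℝ)..z1,
        2 * (1 - r) * z ^ 2 * f z / (((r + 1) * z1 + c) ^ 2 - (1 - r) ^ 2 * z ^ 2) := by
    apply integral_congr
    intro z hz
    rw [Set.uIcc_of_le (by linarith)] at hz
    obtain ⟨h1, h2⟩ := hz
    have d1 : 0 < (r + 1) * z1 + (r - 1) * z + c := hposden z ⟨by linarith, h2⟩
    have d2 : 0 < (r + 1) * z1 + (r - 1) * (-z) + c := hposden (-z) ⟨by linarith, by linarith⟩
    have d3 : ((r + 1) * z1 + c) ^ 2 - (1 - r) ^ 2 * z ^ 2 =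
        ((r + 1) * z1 + (r - 1) * z + c) * ((r + 1) * z1 + (r - 1) * (-z) + c) := by ring
    simp only [hh]
    rw [← hsymm z, d3, div_add_div _ _ d1.ne' d2.ne']
    congr 1
    ring
  refine ⟨key.trans hcongr, ?_⟩
  have : (0:ℝ) ≤ ∫ z in (0:ℝ)..z1,
      2 * (1 - r) * z ^ 2 * f z / (((r + 1) * z1 + c) ^ 2 - (1 - r) ^ 2 * z ^ 2) := by
    apply integral_nonneg (by linarith)
    intro u hu
    apply div_nonneg
    · exact mul_nonneg (mul_nonneg (by linarith) (sq_nonneg u)) (hf0 u)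
    · nlinarith [mul_pos (show (0:ℝ) < (r+1)*z1+c - (1-r)*u by nlinarith [hu.2])
        (show (0:ℝ) < (r+1)*z1+c + (1-r)*u by nlinarith [hu.1])]
  exact (key.trans hcongr).ge.trans' this
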